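/- If M is T₀ and the covers are fine enough (for every point m and every neighborhood N of m there exist an index i and U ∈ τ(U_i) with m ∈ U ⊆ N), then the canonical map π∞ : M → P∞ into the inverse limit of the finitary quotients is injective. -/

import Mathlib

/-- If `M` is T₀ and the covers are fine enough (for every point `m` and neighbourhood `N`
of `m` there are an index `i` and a `τ(U_i)`-open set `U` with `m ∈ U ⊆ N`), then the
canonical map `π∞ : M → P∞` into the inverse limit of the finitary T₀ quotients is
injective. -/
theorem inverse_limit_injective {M : Type*} [TopologicalSpace M] [T0Space M]
    (t : ℕ → TopologicalSpace M)
    (hcoarser : ∀ (n : ℕ) (U : Set M), (t n).IsOpen U → IsOpen U)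
    {P : ℕ → Type*} [∀ n, TopologicalSpace (P n)] [∀ n, T0Space (P n)]
    (π : ∀ n, M → P n)
    (hquot : ∀ (n : ℕ) (m m' : M),
      π n m = π n m' ↔ ∀ U : Set M, (t n).IsOpen U → (m ∈ U ↔ m' ∈ U))
    (p : ∀ i j : ℕ, i ≤ j → P j → P i)
    (hcoh : ∀ (i j : ℕ) (h : i ≤ j) (m : M), p i j h (π j m) = π i m)
    (hfine : ∀ (m : M) (N : Set M), IsOpen N → m ∈ N →
      ∃ (i : ℕ) (U : Set M), (t i).IsOpen U ∧ m ∈ U ∧ U ⊆ N) :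
    Function.Injective fun m : M =>
      (⟨fun n => π n m, fun i j h => hcoh i j h m⟩ :
        {x : ∀ n, P n // ∀ (i j : ℕ) (h : i ≤ j), p i j h (x j) = x i}) := by
  intro m m' h
  have hn : ∀ n, π n m = π n m' := fun n => congrFun (congrArg Subtype.val h) n
  have key : ∀ N : Set M, IsOpen N → m ∈ N → m' ∈ N := by
    intro N hN hm
    obtain ⟨i, U, hU, hmU, hUN⟩ := hfine m N hN hm
    exact hUN (((hquot i m m').mp (hn i) U hU).mp hmU)
  have key' : ∀ N : Set M, IsOpen N → m' ∈ N → m ∈ N := by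
    intro N hN hm
    obtain ⟨i, U, hU, hmU, hUN⟩ := hfine m' N hN hm
    exact hUN (((hquot i m m').mp (hn i) U hU).mpr hmU)
  refine Inseparable.eq ?_
  rw [inseparable_iff_forall_isOpen]
  exact fun N hN => ⟨key N hN, key' N hN⟩
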